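/- arXiv:2311.16925 — 3 statements merged into one kernel-verified Lean document; each statement's English description precedes it below -/
import Mathlib

section
/- If genotypes g and h are distinct, then the column of W_0 indexed by g is orthogonal to the column of W_a indexed by h; and the inner product of the g-column of W_0 with the g-column of W_a equals m_1⋯m_n. -/
def wronOmega {m : ℕ} [NeZero m] (x y : Fin m) : ℝ :=
  if x ≠ 0 ∧ x = y then 1 else 0

def wronMu {m : ℕ} [NeZero m] (x y : Fin m) : ℝ :=
  if x = 0 ∨ y = 0 then 1 else if x = y then -1 else 0

def Wa {n : ℕ} (m : Fin n → ℕ) [∀ i, NeZero (m i)] :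
    Matrix (∀ i, Fin (m i)) (∀ i, Fin (m i)) ℝ :=
  fun g h => ∏ i, (1 - (m i : ℝ) * wronOmega (g i) (h i))

def W0 {n : ℕ} (m : Fin n → ℕ) [∀ i, NeZero (m i)] :
    Matrix (∀ i, Fin (m i)) (∀ i, Fin (m i)) ℝ :=
  fun g h => ∏ i, wronMu (g i) (h i)

lemma sum_mu {m : ℕ} [NeZero m] (g : Fin m) :
    ∑ x : Fin m, wronMu x g = if g = 0 then (m : ℝ) else 0 := by
  rcases eq_or_ne g 0 with hg | hg
  · subst hg
    simp [wronMu]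
  · rw [if_neg hg]
    have : ∀ x : Fin m, wronMu x g =
        (if x = (0 : Fin m) then (1:ℝ) else 0) + (if x = g then (-1:ℝ) else 0) := by
      intro x
      unfold wronMu
      rcases eq_or_ne x 0 with hx | hx
      · subst hx
        simp [hg, Ne.symm hg]
      · rcases eq_or_ne x g with hxg | hxg <;> simp [hx, hxg, hg]
    simp_rw [this, Finset.sum_add_distrib, Finset.sum_ite_eq' Finset.univ]
    simp

lemma sum_mu_omega {m : ℕ} [NeZero m] (g h : Fin m) :
    ∑ x : Fin m, wronMu x g * wronOmega x h = if h ≠ 0 then wronMu h g else 0 := by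
  have : ∀ x : Fin m, wronMu x g * wronOmega x h =
      if x = h then (if h ≠ 0 then wronMu h g else 0) else 0 := by
    intro x
    unfold wronOmega
    rcases eq_or_ne x h with hxh | hxh
    · subst hxh
      rcases eq_or_ne x 0 with hx | hx <;> simp [hx]
    · simp [hxh]
  simp_rw [this, Finset.sum_ite_eq' Finset.univ]
  simp

lemma key {m : ℕ} [NeZero m] (g h : Fin m) :
    ∑ x : Fin m, wronMu x g * (1 - (m : ℝ) * wronOmega x h) =
    if g = h then (m : ℝ) else 0 := by
  have expand : ∀ x : Fin m, wronMu x g * (1 - (m : ℝ) * wronOmega x h) =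
      wronMu x g - (m : ℝ) * (wronMu x g * wronOmega x h) := by intro x; ring
  simp_rw [expand, Finset.sum_sub_distrib, ← Finset.mul_sum, sum_mu, sum_mu_omega]
  rcases eq_or_ne g 0 with hg | hg <;> rcases eq_or_ne h 0 with hh | hh <;>
    simp [hg, hh, wronMu]
  · simp [Ne.symm hh]
  · rcases eq_or_ne g h with hgh | hgh
    · simp [hgh, hh, Ne.symm hh]
    · simp [hgh, hh, Ne.symm hgh]

theorem W0_Wa_columns_biorthogonal {n : ℕ} (m : Fin n → ℕ) [∀ i, NeZero (m i)]
    (g h : ∀ i, Fin (m i)) :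
    (g ≠ h → ∑ x : ∀ i, Fin (m i), W0 m x g * Wa m x h = 0) ∧
    ∑ x : ∀ i, Fin (m i), W0 m x g * Wa m x g = ∏ i, (m i : ℝ) := by
  have factor : ∀ k : ∀ i, Fin (m i),
      ∑ x : ∀ i, Fin (m i), W0 m x g * Wa m x k =
      ∏ i, (if g i = k i then (m i : ℝ) else 0) := by
    intro k
    have step : ∀ x : ∀ i, Fin (m i), W0 m x g * Wa m x k =
        ∏ i, (wronMu (x i) (g i) * (1 - (m i : ℝ) * wronOmega (x i) (k i))) := by
      intro x; rw [W0, Wa, Finset.prod_mul_distrib]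
    simp_rw [step]
    rw [show (Finset.univ : Finset (∀ i, Fin (m i))) =
        Fintype.piFinset (fun i => (Finset.univ : Finset (Fin (m i)))) from
        (Fintype.piFinset_univ).symm,
      ← Finset.prod_univ_sum (fun _ => Finset.univ)
        (fun i j => wronMu j (g i) * (1 - (m i : ℝ) * wronOmega j (k i)))]
    exact Finset.prod_congr rfl fun i _ => key (g i) (k i)
  refine ⟨fun hgh => ?_, ?_⟩
  · rw [factor h]
    obtain ⟨i, hi⟩ := Function.ne_iff.mp hgh
    exact Finset.prod_eq_zero (Finset.mem_univ i) (if_neg hi)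
  · rw [factor g]; simp
end

section
/- Every additive fitness landscape lies in the span of the columns of W_a indexed by genotypes of degree at most 1. That is, if v : (∏_{i=1}^n Fin m_i) → ℝ satisfies v(g) = Σ_{i=1}^n φ(i, g_i) for some function φ, then when v is expanded in the basis of columns of W_a, the coefficient at every genotype of degree ≥ 2 is zero. -/
def deg {n : ℕ} {m : Fin n → ℕ} [∀ i, NeZero (m i)] (g : ∀ i, Fin (m i)) : ℕ :=
  (Finset.univ.filter fun i => g i ≠ 0).card

lemma sum_wronMu {m : ℕ} [NeZero m] {x : Fin m} (hx : x ≠ 0) :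
    ∑ y, wronMu x y = 0 := by
  have h : ∀ y : Fin m, wronMu x y
      = (if y = 0 then (1:ℝ) else 0) + (if y = x then -1 else 0) := by
    intro y
    unfold wronMu
    by_cases h0 : y = 0
    · subst h0
      simp [hx, Ne.symm hx]
    · simp [hx, h0, eq_comm]
  simp [h, Finset.sum_add_distrib]

theorem additive_coeffs_vanish {n : ℕ} (hn : 1 ≤ n) (m : Fin n → ℕ)
    [∀ i, NeZero (m i)] (v : (∀ i, Fin (m i)) → ℝ)
    (φ : (i : Fin n) → Fin (m i) → ℝ)
    (hv : ∀ g, v g = ∑ i, φ i (g i)) :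
    ∀ g : ∀ i, Fin (m i), 2 ≤ deg g →
      (∏ i, (m i : ℝ))⁻¹ * (W0 m).mulVec v g = 0 := by
  intro g hg
  suffices h : (W0 m).mulVec v g = 0 by rw [h, mul_zero]
  unfold Matrix.mulVec dotProduct W0
  simp only [hv, Finset.mul_sum]
  rw [Finset.sum_comm]
  apply Finset.sum_eq_zero
  intro j _
  -- find i₀ ≠ j with g i₀ ≠ 0
  obtain ⟨i₀, hi₀mem, hi₀j⟩ :
      ∃ i ∈ Finset.univ.filter fun i => g i ≠ 0, i ≠ j := by
    rcases Finset.exists_mem_ne (by unfold deg at hg; omega : 1 < (Finset.univ.filter fun i => g i ≠ 0).card) j with ⟨i, hi, hij⟩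
    exact ⟨i, hi, hij⟩
  have hgi₀ : g i₀ ≠ 0 := (Finset.mem_filter.mp hi₀mem).2
  set F : ∀ i, Fin (m i) → ℝ :=
    fun i x => wronMu (g i) x * (if i = j then φ i x else 1) with hF
  have key : ∀ h : ∀ i, Fin (m i),
      (∏ i, wronMu (g i) (h i)) * φ j (h j) = ∏ i, F i (h i) := by
    intro h
    rw [hF]
    simp only
    rw [Finset.prod_mul_distrib]
    congr 1
    rw [Finset.prod_ite_eq' Finset.univ j (fun i => φ i (h i))]
    simp
  simp only [key]
  rw [← Fintype.prod_sum F]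
  apply Finset.prod_eq_zero (Finset.mem_univ i₀)
  rw [hF]
  simp only [if_neg hi₀j, mul_one]
  exact sum_wronMu hgi₀
end

section
/- Every column of W_0 indexed by a genotype of degree at most 1 is itself an additive fitness landscape; consequently, the set of additive fitness landscapes equals the span of the columns of W_0 (equivalently W_a) indexed by genotypes of degree ≤ 1. -/
def IsAdditive {n : ℕ} {m : Fin n → ℕ} [∀ i, NeZero (m i)]
    (v : (∀ i, Fin (m i)) → ℝ) : Prop :=
  ∃ φ : (i : Fin n) → Fin (m i) → ℝ, ∀ g, v g = ∑ i, φ i (g i)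


open Finset

section helpers

lemma wronMu_zero_right {k : ℕ} [NeZero k] (x : Fin k) : wronMu x 0 = 1 := by
  simp [wronMu]

lemma wronOmega_zero_right {k : ℕ} [NeZero k] (x : Fin k) : wronOmega x 0 = 0 := by
  unfold wronOmega
  exact if_neg (fun h => h.1 h.2)

lemma sum_wronMu_s19 {k : ℕ} [NeZero k] (x : Fin k) :
    ∑ a, wronMu x a = if x = 0 then (k : ℝ) else 0 := by
  rcases eq_or_ne x 0 with rfl | hx
  · simp [wronMu]
  · rw [if_neg hx]
    have h : ∀ a : Fin k,
        wronMu x a = (if a = 0 then (1:ℝ) else 0) + (if a = x then -1 else 0) := by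
      intro a
      rcases eq_or_ne a 0 with rfl | ha
      · simp [wronMu, hx, Ne.symm hx]
      · rcases eq_or_ne a x with rfl | hax
        · simp [wronMu, hx, ha]
        · have h1 : ¬ (x = 0 ∨ a = 0) := by tauto
          have h2 : ¬ x = a := fun h => hax h.symm
          simp [wronMu, h1, h2, ha, hax, hx]
    rw [Finset.sum_congr rfl (fun a _ => h a), Finset.sum_add_distrib]
    simp

lemma sum_wronOmega {k : ℕ} [NeZero k] (x : Fin k) :
    ∑ a, (1 - (k:ℝ) * wronOmega x a) = if x = 0 then (k : ℝ) else 0 := by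
  rcases eq_or_ne x 0 with rfl | hx
  · simp [wronOmega]
  · have h : ∀ a : Fin k,
        (1 - (k:ℝ) * wronOmega x a) = 1 - (k:ℝ) * (if a = x then 1 else 0) := by
      intro a
      rcases eq_or_ne a x with rfl | hax
      · simp [wronOmega, hx]
      · have h2 : ¬ x = a := fun h => hax h.symm
        simp [wronOmega, hax, h2]
    rw [Finset.sum_congr rfl (fun a _ => h a)]
    simp [Finset.sum_sub_distrib, ← Finset.mul_sum, hx]

lemma mu_span_top (k : ℕ) [NeZero k] :
    Submodule.span ℝ (Set.range fun a : Fin k => fun x => wronMu x a) = ⊤ := by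
  have hk : (k:ℝ) ≠ 0 := Nat.cast_ne_zero.2 (NeZero.ne k)
  set S := Set.range fun a : Fin k => fun x => wronMu x a with hS
  have hmem : ∀ a : Fin k, (fun x => wronMu x a) ∈ Submodule.span ℝ S :=
    fun a => Submodule.subset_span ⟨a, rfl⟩
  have h0 : (fun x : Fin k => if x = 0 then (1:ℝ) else 0) ∈ Submodule.span ℝ S := by
    have hs : (k:ℝ)⁻¹ • (∑ a : Fin k, fun x => wronMu x a) ∈ Submodule.span ℝ S :=
      Submodule.smul_mem _ _ (Submodule.sum_mem _ fun a _ => hmem a)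
    have he : (k:ℝ)⁻¹ • (∑ a : Fin k, fun x => wronMu x a)
        = fun x : Fin k => if x = 0 then (1:ℝ) else 0 := by
      funext x
      simp only [Pi.smul_apply, Finset.sum_apply, sum_wronMu_s19, smul_eq_mul]
      rcases eq_or_ne x 0 with rfl | hx
      · simp [hk]
      · simp [hx]
    rwa [he] at hs
  have hind : ∀ b : Fin k, (fun x => if b = x then (1:ℝ) else 0) ∈ Submodule.span ℝ S := by
    intro b
    rcases eq_or_ne b 0 with rfl | hb
    · have : (fun x : Fin k => if (0:Fin k) = x then (1:ℝ) else 0)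
          = fun x => if x = 0 then (1:ℝ) else 0 := by
        funext x; simp [eq_comm]
      rw [this]; exact h0
    · have he : (fun x : Fin k => if b = x then (1:ℝ) else 0)
          = (fun x : Fin k => if x = 0 then (1:ℝ) else 0) - fun x => wronMu x b := by
        funext x
        simp only [Pi.sub_apply]
        rcases eq_or_ne x 0 with rfl | hx
        · simp [wronMu, hb]
        · rcases eq_or_ne x b with rfl | hxb
          · simp [wronMu, hx, hb]
          · simp [wronMu, hx, hb, hxb, Ne.symm hxb]
      rw [he]
      exact Submodule.sub_mem _ h0 (hmem b)
  rw [eq_top_iff]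
  rintro f -
  rw [pi_eq_sum_univ f]
  exact Submodule.sum_mem _ fun b _ => Submodule.smul_mem _ _ (hind b)

lemma omega_span_top (k : ℕ) [NeZero k] :
    Submodule.span ℝ (Set.range fun a : Fin k => fun x => 1 - (k:ℝ) * wronOmega x a) = ⊤ := by
  have hk : (k:ℝ) ≠ 0 := Nat.cast_ne_zero.2 (NeZero.ne k)
  set S := Set.range fun a : Fin k => fun x => 1 - (k:ℝ) * wronOmega x a with hS
  have hmem : ∀ a : Fin k, (fun x => 1 - (k:ℝ) * wronOmega x a) ∈ Submodule.span ℝ S :=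
    fun a => Submodule.subset_span ⟨a, rfl⟩
  have hone : (fun _ : Fin k => (1:ℝ)) ∈ Submodule.span ℝ S := by
    have := hmem 0
    have he : (fun x : Fin k => 1 - (k:ℝ) * wronOmega x 0) = fun _ => (1:ℝ) := by
      funext x; rw [wronOmega_zero_right]; ring
    rwa [he] at this
  have h0 : (fun x : Fin k => if x = 0 then (1:ℝ) else 0) ∈ Submodule.span ℝ S := by
    have hs : (k:ℝ)⁻¹ • (∑ a : Fin k, fun x => 1 - (k:ℝ) * wronOmega x a)
        ∈ Submodule.span ℝ S :=
      Submodule.smul_mem _ _ (Submodule.sum_mem _ fun a _ => hmem a)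
    have he : (k:ℝ)⁻¹ • (∑ a : Fin k, fun x => 1 - (k:ℝ) * wronOmega x a)
        = fun x : Fin k => if x = 0 then (1:ℝ) else 0 := by
      funext x
      simp only [Pi.smul_apply, Finset.sum_apply, sum_wronOmega, smul_eq_mul]
      rcases eq_or_ne x 0 with rfl | hx
      · simp [hk]
      · simp [hx]
    rwa [he] at hs
  have hind : ∀ b : Fin k, (fun x => if b = x then (1:ℝ) else 0) ∈ Submodule.span ℝ S := by
    intro b
    rcases eq_or_ne b 0 with rfl | hb
    · have : (fun x : Fin k => if (0:Fin k) = x then (1:ℝ) else 0)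
          = fun x => if x = 0 then (1:ℝ) else 0 := by
        funext x; simp [eq_comm]
      rw [this]; exact h0
    · have he : (fun x : Fin k => if b = x then (1:ℝ) else 0)
          = (k:ℝ)⁻¹ • ((fun _ : Fin k => (1:ℝ)) - fun x => 1 - (k:ℝ) * wronOmega x b) := by
        funext x
        simp only [Pi.smul_apply, Pi.sub_apply, smul_eq_mul]
        rcases eq_or_ne x b with rfl | hxb
        · simp [wronOmega, hb, hk]
        · have h1 : ¬ b = x := fun h => hxb h.symm
          simp [wronOmega, hxb, h1]
      rw [he]
      exact Submodule.smul_mem _ _ (Submodule.sub_mem _ hone (hmem b))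
  rw [eq_top_iff]
  rintro f -
  rw [pi_eq_sum_univ f]
  exact Submodule.sum_mem _ fun b _ => Submodule.smul_mem _ _ (hind b)

variable {n : ℕ} {m : Fin n → ℕ} [∀ i, NeZero (m i)]

/-- The genotype supported at coordinate `j` with value `a`. -/
def eGen (m : Fin n → ℕ) [∀ i, NeZero (m i)] (j : Fin n) (a : Fin (m j)) :
    ∀ i, Fin (m i) :=
  Function.update (fun i => (0 : Fin (m i))) j a

lemma eGen_ne (j : Fin n) (a : Fin (m j)) {i : Fin n} (hij : i ≠ j) :
    eGen m j a i = 0 :=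
  Function.update_of_ne hij _ _

lemma deg_eGen (j : Fin n) (a : Fin (m j)) : deg (eGen m j a) ≤ 1 := by
  unfold deg
  have : (Finset.univ.filter fun i => eGen m j a i ≠ 0) ⊆ {j} := by
    intro i hi
    simp only [Finset.mem_filter] at hi
    simp only [Finset.mem_singleton]
    by_contra hij
    exact hi.2 (eGen_ne j a hij)
  simpa using Finset.card_le_card this

lemma col_eq_of_support {g : ∀ i, Fin (m i)} {j : Fin n}
    (hg : ∀ i, i ≠ j → g i = 0) :
    (fun h => W0 m h g) = fun h => wronMu (h j) (g j) := by
  funext h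
  unfold W0
  refine Finset.prod_eq_single j (fun i _ hij => ?_) (by simp)
  rw [hg i hij, wronMu_zero_right]

lemma colA_eq_of_support {g : ∀ i, Fin (m i)} {j : Fin n}
    (hg : ∀ i, i ≠ j → g i = 0) :
    (fun h => Wa m h g) = fun h => 1 - (m j : ℝ) * wronOmega (h j) (g j) := by
  funext h
  unfold Wa
  refine Finset.prod_eq_single j (fun i _ hij => ?_) (by simp)
  rw [hg i hij, wronOmega_zero_right]; ring

lemma exists_support (hn : 1 ≤ n) {g : ∀ i, Fin (m i)} (hg : deg g ≤ 1) :
    ∃ j, ∀ i, i ≠ j → g i = 0 := by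
  by_cases hall : ∀ i, g i = 0
  · exact ⟨⟨0, hn⟩, fun i _ => hall i⟩
  · push_neg at hall
    obtain ⟨j, hj⟩ := hall
    refine ⟨j, fun i hij => ?_⟩
    by_contra hi
    have h1 : i ∈ Finset.univ.filter fun i => g i ≠ 0 := by simp [hi]
    have h2 : j ∈ Finset.univ.filter fun i => g i ≠ 0 := by simp [hj]
    exact hij (Finset.card_le_one.mp hg i h1 j h2)

lemma isAdditive_single (hn : 1 ≤ n) (j : Fin n) (f : Fin (m j) → ℝ) :
    IsAdditive (fun h : ∀ i, Fin (m i) => f (h j)) := by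
  refine ⟨Function.update (fun i _ => (0:ℝ)) j f, fun g => ?_⟩
  rw [Finset.sum_eq_single j (fun i _ hij => by rw [Function.update_of_ne hij]) (by simp)]
  rw [Function.update_self]

/-- The submodule of additive landscapes. -/
def addSub (m : Fin n → ℕ) [∀ i, NeZero (m i)] :
    Submodule ℝ ((∀ i, Fin (m i)) → ℝ) where
  carrier := {v | IsAdditive v}
  add_mem' := by
    rintro u v ⟨φ, hφ⟩ ⟨ψ, hψ⟩
    exact ⟨fun i x => φ i x + ψ i x, fun g => by
      simp [hφ g, hψ g, Finset.sum_add_distrib]⟩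
  zero_mem' := ⟨fun i x => 0, by simp⟩
  smul_mem' := by
    rintro c v ⟨φ, hφ⟩
    exact ⟨fun i x => c * φ i x, fun g => by simp [hφ g, Finset.mul_sum]⟩

lemma single_mem_span_col0 (j : Fin n) (f : Fin (m j) → ℝ) :
    (fun h : ∀ i, Fin (m i) => f (h j)) ∈
      Submodule.span ℝ ((fun g => fun h => W0 m h g) '' {g | deg g ≤ 1}) := by
  set L : (Fin (m j) → ℝ) →ₗ[ℝ] ((∀ i, Fin (m i)) → ℝ) :=
    LinearMap.funLeft ℝ ℝ (fun h => h j) with hL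
  have hf : f ∈ Submodule.span ℝ (Set.range fun a : Fin (m j) => fun x => wronMu x a) := by
    rw [mu_span_top]; trivial
  have hmap := Submodule.mem_map_of_mem (f := L) hf
  rw [Submodule.map_span] at hmap
  refine Submodule.span_mono ?_ hmap
  rintro _ ⟨_, ⟨a, rfl⟩, rfl⟩
  refine ⟨eGen m j a, deg_eGen j a, ?_⟩
  show (fun h => W0 m h (eGen m j a)) = _
  rw [col_eq_of_support (fun i hij => eGen_ne j a hij)]
  simp only [eGen, Function.update_self]
  rfl

lemma single_mem_span_colA (j : Fin n) (f : Fin (m j) → ℝ) :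
    (fun h : ∀ i, Fin (m i) => f (h j)) ∈
      Submodule.span ℝ ((fun g => fun h => Wa m h g) '' {g | deg g ≤ 1}) := by
  set L : (Fin (m j) → ℝ) →ₗ[ℝ] ((∀ i, Fin (m i)) → ℝ) :=
    LinearMap.funLeft ℝ ℝ (fun h => h j) with hL
  have hf : f ∈ Submodule.span ℝ
      (Set.range fun a : Fin (m j) => fun x => 1 - (m j : ℝ) * wronOmega x a) := by
    rw [omega_span_top]; trivial
  have hmap := Submodule.mem_map_of_mem (f := L) hf
  rw [Submodule.map_span] at hmap
  refine Submodule.span_mono ?_ hmap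
  rintro _ ⟨_, ⟨a, rfl⟩, rfl⟩
  refine ⟨eGen m j a, deg_eGen j a, ?_⟩
  show (fun h => Wa m h (eGen m j a)) = _
  rw [colA_eq_of_support (fun i hij => eGen_ne j a hij)]
  simp only [eGen, Function.update_self]
  rfl

lemma additive_mem_span {v : (∀ i, Fin (m i)) → ℝ} (hv : IsAdditive v)
    {C : Set ((∀ i, Fin (m i)) → ℝ)}
    (hC : ∀ j (f : Fin (m j) → ℝ),
      (fun h : ∀ i, Fin (m i) => f (h j)) ∈ Submodule.span ℝ C) :
    v ∈ Submodule.span ℝ C := by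
  obtain ⟨φ, hφ⟩ := hv
  have hv' : v = ∑ i, fun h : ∀ k, Fin (m k) => φ i (h i) := by
    funext g; rw [hφ g]; simp
  rw [hv']
  exact Submodule.sum_mem _ fun i _ => hC i (φ i)

end helpers


theorem additive_eq_lowDegree_span {n : ℕ} (hn : 1 ≤ n) (m : Fin n → ℕ)
    [∀ i, NeZero (m i)] :
    (∀ g : ∀ i, Fin (m i), deg g ≤ 1 → IsAdditive (fun h => W0 m h g)) ∧
    {v : (∀ i, Fin (m i)) → ℝ | IsAdditive v} =
      ↑(Submodule.span ℝ ((fun g => fun h => W0 m h g) '' {g | deg g ≤ 1})) ∧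
    {v : (∀ i, Fin (m i)) → ℝ | IsAdditive v} =
      ↑(Submodule.span ℝ ((fun g => fun h => Wa m h g) '' {g | deg g ≤ 1})) := by
  have part1 : ∀ g : ∀ i, Fin (m i), deg g ≤ 1 → IsAdditive (fun h => W0 m h g) := by
    intro g hg
    obtain ⟨j, hj⟩ := exists_support hn hg
    rw [col_eq_of_support hj]
    exact isAdditive_single hn j (fun x => wronMu x (g j))
  refine ⟨part1, ?_, ?_⟩
  · apply Set.Subset.antisymm
    · intro v hv
      exact additive_mem_span (C := (fun g => fun h => W0 m h g) '' {g | deg g ≤ 1}) hv fun j f => single_mem_span_col0 j f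
    · have : Submodule.span ℝ ((fun g => fun h => W0 m h g) '' {g | deg g ≤ 1})
          ≤ addSub m := by
        rw [Submodule.span_le]
        rintro _ ⟨g, hg, rfl⟩
        exact part1 g hg
      exact fun v hv => this hv
  · apply Set.Subset.antisymm
    · intro v hv
      exact additive_mem_span (C := (fun g => fun h => Wa m h g) '' {g | deg g ≤ 1}) hv fun j f => single_mem_span_colA j f
    · have : Submodule.span ℝ ((fun g => fun h => Wa m h g) '' {g | deg g ≤ 1})
          ≤ addSub m := by
        rw [Submodule.span_le]
        rintro _ ⟨g, hg, rfl⟩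
        obtain ⟨j, hj⟩ := exists_support hn hg
        show IsAdditive fun h => Wa m h g
        rw [colA_eq_of_support hj]
        exact isAdditive_single hn j (fun x => 1 - (m j : ℝ) * wronOmega x (g j))
      exact fun v hv => this hv
end
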